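/- Suppose X₁,…,X_m are η-coplanar. Then the maximum over unit vectors θ ∈ C_X of γ(θ)/⟨η, θ⟩ equals log m, and it is attained at θ₀ = (Σ_{j=1}^m X_j)/‖Σ_{j=1}^m X_j‖. -/

import Mathlib

open scoped BigOperators RealInnerProductSpace
open Filter Topology

noncomputable section

/-- `Euc s` is the Euclidean space `ℝ^s`. -/
abbrev Euc (s : ℕ) := EuclideanSpace ℝ (Fin s)

/-- The additive semigroup `X₁ℕ + ⋯ + X_mℕ` generated by the vectors `X j`. -/
def sgOf {s : ℕ} {ι : Type*} [Fintype ι] (X : ι → Euc s) : Set (Euc s) :=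
  {z | ∃ u : ι → ℕ, ∑ j, (u j : ℝ) • X j = z}

/-- The lattice `X₁ℤ + ⋯ + X_mℤ` generated by the vectors `X j`. -/
def latOf {s : ℕ} {ι : Type*} [Fintype ι] (X : ι → Euc s) : Set (Euc s) :=
  {z | ∃ u : ι → ℤ, ∑ j, (u j : ℝ) • X j = z}

/-- The convex cone `X₁ℝ⁺ + ⋯ + X_mℝ⁺` generated by the vectors `X j`. -/
def coneOf {s : ℕ} {ι : Type*} [Fintype ι] (X : ι → Euc s) : Set (Euc s) :=
  {x | ∃ c : ι → ℝ, (∀ j, 0 ≤ c j) ∧ ∑ j, c j • X j = x}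

/-- The multiplicity of `z`: the number of finite words `i₁…i_n` with
`X_{i₁} + ⋯ + X_{i_n} = z`. -/
def mult {s : ℕ} {ι : Type*} [Fintype ι] (X : ι → Euc s) (z : Euc s) : ℕ :=
  Set.ncard {w : List ι | (w.map X).sum = z}

/-- The multiplicity extended to the cone: the minimum of `mult X z` over points
`z` of the semigroup nearest to `x`. -/
def multC {s : ℕ} {ι : Type*} [Fintype ι] (X : ι → Euc s) (x : Euc s) : ℕ :=
  sInf {n | ∃ z ∈ sgOf X, dist x z = Metric.infDist x (sgOf X) ∧ mult X z = n}

/-- All the vectors `X j` have integer coordinates. -/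
def IntegralVecs {s : ℕ} {ι : Type*} (X : ι → Euc s) : Prop :=
  ∀ j i, ∃ n : ℤ, X j i = (n : ℝ)

/-- The entropy `h(p) = -∑ p_j log p_j` of a probability vector. -/
def entropy {m : ℕ} (p : Fin m → ℝ) : ℝ := -∑ j, p j * Real.log (p j)

/-- The `p`-th iteration of `X`: all sums `X_{ω₁} + ⋯ + X_{ω_p}` over words `ω`. -/
def iter {s m : ℕ} (X : Fin m → Euc s) (p : ℕ) : (Fin p → Fin m) → Euc s :=
  fun ω => ∑ i, X (ω i)

section Aux

variable {s m : ℕ} {X : Fin m → Euc s}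

lemma euc_sum_apply {α : Type*} (t : Finset α) {s : ℕ} (f : α → Euc s) (i : Fin s) :
    (∑ x ∈ t, f x) i = ∑ x ∈ t, f x i :=
  map_sum (EuclideanSpace.proj (𝕜 := ℝ) i) f t

variable {s m : ℕ} {X : Fin m → Euc s}

lemma sg_coords (hint : IntegralVecs X) {z : Euc s} (hz : z ∈ sgOf X) (i : Fin s) :
    ∃ a : ℤ, z i = (a : ℝ) := by
  obtain ⟨u, rfl⟩ := hz
  choose A hA using hint
  refine ⟨∑ j, (u j : ℤ) * A j i, ?_⟩
  rw [euc_sum_apply]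
  push_cast
  exact Finset.sum_congr rfl fun j _ => by rw [PiLp.smul_apply, hA, smul_eq_mul]

lemma dist_ge_one (hint : IntegralVecs X) {z z' : Euc s} (hz : z ∈ sgOf X)
    (hz' : z' ∈ sgOf X) (hne : z ≠ z') : 1 ≤ dist z z' := by
  choose a ha using sg_coords hint hz
  choose b hb using sg_coords hint hz'
  have hi : ∃ i, z i ≠ z' i := by
    by_contra h; push_neg at h; exact hne (PiLp.ext h)
  obtain ⟨i, hi⟩ := hi
  have h1 : (1 : ℝ) ≤ dist (z i) (z' i) := by
    rw [ha, hb] at hi ⊢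
    rw [Real.dist_eq]
    have hab : a i ≠ b i := fun h => hi (by rw [h])
    have h2 : (1 : ℤ) ≤ |a i - b i| := Int.one_le_abs (sub_ne_zero.2 hab)
    calc (1:ℝ) ≤ ((|a i - b i| : ℤ) : ℝ) := by exact_mod_cast h2
      _ = |(a i : ℝ) - (b i : ℝ)| := by push_cast [Int.cast_abs]; ring_nf
  calc (1:ℝ) ≤ dist (z i) (z' i) := h1
    _ ≤ dist z z' := by
        rw [EuclideanSpace.dist_eq]
        have : dist (z i) (z' i) = Real.sqrt (dist (z i) (z' i) ^ 2) := by
          rw [Real.sqrt_sq dist_nonneg]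
        rw [this]
        apply Real.sqrt_le_sqrt
        exact Finset.single_le_sum (f := fun j => dist (z j) (z' j) ^ 2) (fun j _ => sq_nonneg _) (Finset.mem_univ i)

lemma sg_nonempty : (sgOf X).Nonempty := ⟨0, 0, by simp⟩

lemma sg_closed (hint : IntegralVecs X) : IsClosed (sgOf X) :=
  Metric.isClosed_of_pairwise_le_dist one_pos fun _ hz _ hz' hne => dist_ge_one hint hz hz' hne

lemma exists_nearest (hint : IntegralVecs X) (x : Euc s) :
    ∃ z ∈ sgOf X, Metric.infDist x (sgOf X) = dist x z :=
  (sg_closed hint).exists_infDist_eq_dist sg_nonempty x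

lemma word_len (η : Euc s) (hη : ∀ j, ⟪η, X j⟫ = 1) (w : List (Fin m)) :
    ⟪η, (w.map X).sum⟫ = w.length := by
  induction w with
  | nil => simp
  | cons a t ih => simp [inner_add_right, ih, hη a, add_comm]

lemma inner_sg (η : Euc s) (hη : ∀ j, ⟪η, X j⟫ = 1) (u : Fin m → ℕ) :
    ⟪η, ∑ j, (u j : ℝ) • X j⟫ = ((∑ j, u j : ℕ) : ℝ) := by
  rw [inner_sum]
  push_cast
  exact Finset.sum_congr rfl fun j _ => by rw [real_inner_smul_right, hη, mul_one]

lemma wordset_sub (η : Euc s) (hη : ∀ j, ⟪η, X j⟫ = 1) {z : Euc s} {N : ℕ}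
    (hzN : ⟪η, z⟫ = (N : ℝ)) :
    {w : List (Fin m) | (w.map X).sum = z} ⊆
      List.ofFn '' (Set.univ : Set (Fin N → Fin m)) := by
  intro w hw
  have hlen : w.length = N := by
    have := word_len η hη w
    rw [hw, hzN] at this
    exact_mod_cast this.symm
  subst hlen
  exact ⟨w.get, Set.mem_univ _, List.ofFn_get w⟩

lemma wordset_finite (η : Euc s) (hη : ∀ j, ⟪η, X j⟫ = 1) {z : Euc s} {N : ℕ}
    (hzN : ⟪η, z⟫ = (N : ℝ)) :
    {w : List (Fin m) | (w.map X).sum = z}.Finite :=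
  (Set.finite_univ.image _).subset (wordset_sub η hη hzN)

lemma mult_le_pow (η : Euc s) (hη : ∀ j, ⟪η, X j⟫ = 1) {z : Euc s} {N : ℕ}
    (hzN : ⟪η, z⟫ = (N : ℝ)) : mult X z ≤ m ^ N := by
  have h1 : mult X z ≤ (List.ofFn '' (Set.univ : Set (Fin N → Fin m))).ncard :=
    Set.ncard_le_ncard (wordset_sub η hη hzN) (Set.finite_univ.image _)
  calc mult X z ≤ _ := h1
    _ ≤ (Set.univ : Set (Fin N → Fin m)).ncard := Set.ncard_image_le Set.finite_univ
    _ = m ^ N := by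
        rw [Set.ncard_univ, Nat.card_eq_fintype_card]
        simp

lemma mult_pos (η : Euc s) (hη : ∀ j, ⟪η, X j⟫ = 1) {z : Euc s} (hz : z ∈ sgOf X) :
    1 ≤ mult X z := by
  obtain ⟨u, rfl⟩ := hz
  have hfin := wordset_finite η hη (inner_sg η hη u)
  have hne : {w : List (Fin m) | (w.map X).sum = ∑ j, (u j : ℝ) • X j}.Nonempty := by
    refine ⟨(List.finRange m).flatMap fun j => List.replicate (u j) j, ?_⟩
    show ((((List.finRange m).flatMap fun j => List.replicate (u j) j)).map X).sum = _
    rw [List.map_flatMap, List.flatMap, List.sum_flatten, List.map_map, Fin.sum_univ_def]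
    congr 1
    apply List.map_congr_left
    intro j _
    show ((List.replicate (u j) j).map X).sum = (u j : ℝ) • X j
    rw [List.map_replicate, List.sum_replicate, ← Nat.cast_smul_eq_nsmul ℝ]
  have := (Set.ncard_pos hfin).2 hne
  exact this

lemma multC_le_nearest (hint : IntegralVecs X) (x : Euc s) :
    ∃ z ∈ sgOf X, dist x z = Metric.infDist x (sgOf X) ∧ multC X x ≤ mult X z := by
  obtain ⟨z, hz, hd⟩ := exists_nearest hint x
  exact ⟨z, hz, hd.symm, Nat.sInf_le ⟨z, hz, hd.symm, rfl⟩⟩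

lemma one_le_multC (hint : IntegralVecs X) (η : Euc s) (hη : ∀ j, ⟪η, X j⟫ = 1)
    (x : Euc s) : 1 ≤ multC X x := by
  obtain ⟨z, hz, hd, _⟩ := multC_le_nearest hint x
  have hne : {n | ∃ z ∈ sgOf X, dist x z = Metric.infDist x (sgOf X) ∧ mult X z = n}.Nonempty :=
    ⟨mult X z, z, hz, hd, rfl⟩
  obtain ⟨z', hz', _, hz'e⟩ := Nat.sInf_mem hne
  rw [multC, ← hz'e]
  exact mult_pos η hη hz'

lemma infDist_cone_le (hint : IntegralVecs X) {x : Euc s} (hx : x ∈ coneOf X) :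
    Metric.infDist x (sgOf X) ≤ ∑ j, ‖X j‖ := by
  obtain ⟨c, hc, rfl⟩ := hx
  set z : Euc s := ∑ j, ((⌊c j⌋₊ : ℕ) : ℝ) • X j with hzdef
  have hz : z ∈ sgOf X := ⟨fun j => ⌊c j⌋₊, rfl⟩
  refine le_trans (Metric.infDist_le_dist_of_mem hz) ?_
  rw [dist_eq_norm]
  have : (∑ j, c j • X j) - z = ∑ j, (c j - (⌊c j⌋₊ : ℝ)) • X j := by
    rw [hzdef, ← Finset.sum_sub_distrib]
    exact Finset.sum_congr rfl fun j _ => (sub_smul _ _ _).symm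
  rw [this]
  refine le_trans (norm_sum_le _ _) (Finset.sum_le_sum fun j _ => ?_)
  rw [norm_smul]
  have h0 : 0 ≤ c j - (⌊c j⌋₊ : ℝ) := sub_nonneg.2 (Nat.floor_le (hc j))
  have h1 : c j - (⌊c j⌋₊ : ℝ) ≤ 1 := by
    have := Nat.lt_floor_add_one (c j)
    linarith
  calc ‖c j - (⌊c j⌋₊ : ℝ)‖ * ‖X j‖ ≤ 1 * ‖X j‖ := by
        apply mul_le_mul_of_nonneg_right _ (norm_nonneg _)
        rw [Real.norm_eq_abs, abs_of_nonneg h0]; exact h1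
    _ = ‖X j‖ := one_mul _

lemma cone_smul {θ : Euc s} (hθ : θ ∈ coneOf X) {r : ℝ} (hr : 0 ≤ r) :
    r • θ ∈ coneOf X := by
  obtain ⟨c, hc, rfl⟩ := hθ
  exact ⟨fun j => r * c j, fun j => mul_nonneg hr (hc j),
    by rw [Finset.smul_sum]; exact Finset.sum_congr rfl fun j _ => mul_smul _ _ _⟩

lemma gamma_le_aux (hm : 2 ≤ m) (hint : IntegralVecs X) (η : Euc s)
    (hη : ∀ j, ⟪η, X j⟫ = 1) {θ : Euc s} (hθ : θ ∈ coneOf X) {L : ℝ}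
    (hL : Filter.Tendsto (fun k : ℕ => Real.log (multC X ((k : ℝ) • θ)) / k)
      Filter.atTop (nhds L)) : L ≤ ⟪η, θ⟫ * Real.log m := by
  set C : ℝ := ∑ j, ‖X j‖ with hC
  set B : ℝ := ‖η‖ * C with hB
  have hlogm : 0 ≤ Real.log m := Real.log_nonneg (by exact_mod_cast Nat.one_le_of_lt hm)
  have key : ∀ k : ℕ, Real.log (multC X ((k : ℝ) • θ)) ≤ ((k : ℝ) * ⟪η, θ⟫ + B) * Real.log m := by
    intro k
    obtain ⟨z, hz, hd, hmc⟩ := multC_le_nearest hint ((k : ℝ) • θ)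
    obtain ⟨u, hu⟩ := hz
    have hzN : ⟪η, z⟫ = ((∑ j, u j : ℕ) : ℝ) := by rw [← hu]; exact inner_sg η hη u
    set N : ℕ := ∑ j, u j
    have hNle : (N : ℝ) ≤ (k : ℝ) * ⟪η, θ⟫ + B := by
      have hdist : dist ((k : ℝ) • θ) z ≤ C :=
        hd.le.trans (infDist_cone_le hint (cone_smul hθ (Nat.cast_nonneg k)))
      have : (N : ℝ) - (k : ℝ) * ⟪η, θ⟫ = ⟪η, z - (k : ℝ) • θ⟫ := by
        rw [inner_sub_right, hzN, real_inner_smul_right]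
      have habs : |(N : ℝ) - (k : ℝ) * ⟪η, θ⟫| ≤ B := by
        rw [this]
        calc |⟪η, z - (k : ℝ) • θ⟫| ≤ ‖η‖ * ‖z - (k : ℝ) • θ‖ := abs_real_inner_le_norm _ _
          _ ≤ ‖η‖ * C := by
              apply mul_le_mul_of_nonneg_left _ (norm_nonneg _)
              rw [← dist_eq_norm, dist_comm]
              exact hdist
      have := abs_le.1 habs
      linarith [this.2]
    have hmult : (multC X ((k : ℝ) • θ) : ℝ) ≤ (m : ℝ) ^ N := by
      have := hmc.trans (mult_le_pow η hη hzN)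
      exact_mod_cast this
    have hpos : (0 : ℝ) < multC X ((k : ℝ) • θ) := by
      exact_mod_cast one_le_multC hint η hη ((k : ℝ) • θ)
    calc Real.log (multC X ((k : ℝ) • θ)) ≤ Real.log ((m : ℝ) ^ N) :=
          Real.log_le_log hpos hmult
      _ = (N : ℝ) * Real.log m := by rw [Real.log_pow]
      _ ≤ ((k : ℝ) * ⟪η, θ⟫ + B) * Real.log m := mul_le_mul_of_nonneg_right hNle hlogm
  have hbnd : ∀ k : ℕ, 1 ≤ k →
      Real.log (multC X ((k : ℝ) • θ)) / k ≤ ⟪η, θ⟫ * Real.log m + B * Real.log m / k := by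
    intro k hk
    have hkpos : (0 : ℝ) < k := by exact_mod_cast hk
    rw [div_le_iff₀ hkpos]
    calc Real.log (multC X ((k : ℝ) • θ)) ≤ ((k : ℝ) * ⟪η, θ⟫ + B) * Real.log m := key k
      _ = (⟪η, θ⟫ * Real.log m + B * Real.log m / k) * k := by field_simp
  have hrhs : Filter.Tendsto (fun k : ℕ => ⟪η, θ⟫ * Real.log m + B * Real.log m / k)
      Filter.atTop (nhds (⟪η, θ⟫ * Real.log m)) := by
    have h0 : Filter.Tendsto (fun k : ℕ => B * Real.log m / k) Filter.atTop (nhds 0) :=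
      Filter.Tendsto.div_atTop tendsto_const_nhds tendsto_natCast_atTop_atTop
    simpa using tendsto_const_nhds.add h0
  refine le_of_tendsto_of_tendsto hL hrhs ?_
  filter_upwards [Filter.eventually_ge_atTop 1] with k hk using hbnd k hk
def cnt (m : ℕ) {n : ℕ} (ω : Fin n → Fin m) : Fin m → ℕ :=
  fun j => (Finset.univ.filter fun i => ω i = j).card

def Fu (m : ℕ) {n : ℕ} (u : Fin m → ℕ) : Finset (Fin n → Fin m) :=
  Finset.univ.filter fun ω => cnt m ω = u

lemma sum_cnt (ω : Fin n → Fin m) : ∑ j, cnt m ω j = n := by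
  have := Finset.card_eq_sum_card_fiberwise
    (f := ω) (s := Finset.univ) (t := Finset.univ) (fun i _ => Finset.mem_univ _)
  simpa [cnt] using this.symm

lemma sum_X_of_cnt (X : Fin m → Euc s) (ω : Fin n → Fin m) :
    ∑ i, X (ω i) = ∑ j, cnt m ω j • X j := by
  rw [← Finset.sum_fiberwise (g := ω) (f := fun i => X (ω i))]
  refine Finset.sum_congr rfl fun j _ => ?_
  rw [show (Finset.univ.filter fun i => ω i = j).sum (fun i => X (ω i))
      = (Finset.univ.filter fun i => ω i = j).sum (fun _ => X j) from
    Finset.sum_congr rfl fun i hi => by rw [(Finset.mem_filter.1 hi).2]]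
  rw [Finset.sum_const]
  rfl

lemma card_Fu_shift [NeZero m] (u : Fin m → ℕ) (t : Fin m) :
    (Fu m (n := n) (fun j => u (j + t))).card = (Fu m (n := n) u).card := by
  apply Finset.card_bij' (fun ω _ => fun i => ω i + t) (fun ω _ => fun i => ω i - t)
  · intro ω hω
    simp only [Fu, Finset.mem_filter, Finset.mem_univ, true_and] at hω ⊢
    funext j
    have h1 : cnt m (fun i => ω i + t) j = cnt m ω (j - t) := by
      simp only [cnt]
      apply Finset.card_bij' (fun i _ => i) (fun i _ => i) <;>
        simp_all [eq_sub_iff_add_eq]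
    rw [h1, congrFun hω (j - t), sub_add_cancel]
  · intro ω hω
    simp only [Fu, Finset.mem_filter, Finset.mem_univ, true_and] at hω ⊢
    funext j
    have h1 : cnt m (fun i => ω i - t) j = cnt m ω (j + t) := by
      simp only [cnt]
      apply Finset.card_bij' (fun i _ => i) (fun i _ => i) <;>
        simp_all [sub_eq_iff_eq_add]
    rw [h1, congrFun hω (j + t)]
  · intro ω _; funext i; simp
  · intro ω _; funext i; simp

def Kset (m n : ℕ) : Finset (Fin m → ℕ) :=
  Fintype.piFinset fun _ : Fin m => Finset.range (n + 1)

lemma sum_card_Fu : ∑ u ∈ Kset m n, (Fu m (n := n) u).card = m ^ n := by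
  have h := Finset.card_eq_sum_card_fiberwise
    (f := fun ω : Fin n → Fin m => cnt m ω) (s := Finset.univ) (t := Kset m n) ?_
  · have : (Finset.univ : Finset (Fin n → Fin m)).card = m ^ n := by
      simp [Fintype.card_fun]
    rw [this] at h
    exact h.symm
  · intro ω _
    simp only [Kset, Finset.mem_coe, Fintype.mem_piFinset, Finset.mem_range]
    intro j
    have : cnt m ω j ≤ n := by
      simpa [cnt] using Finset.card_filter_le (Finset.univ : Finset (Fin n)) _
    omega

lemma card_K : (Kset m n).card = (n + 1) ^ m := by
  simp [Kset, Fintype.card_piFinset]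

def Dty (m n : ℕ) : Type :=
  {p : (Fin m → ℕ) × (Fin m → Fin n → Fin m) //
    p.1 ∈ Kset m n ∧ ∀ t, p.2 t ∈ Fu m (fun j => p.1 (j + t))}

def DtyEquiv (m n : ℕ) : Dty m n ≃
    Σ u : {u : Fin m → ℕ // u ∈ Kset m n},
      ∀ t : Fin m, {ω : Fin n → Fin m // ω ∈ Fu m (fun j => u.1 (j + t))} where
  toFun d := ⟨⟨d.1.1, d.2.1⟩, fun t => ⟨d.1.2 t, d.2.2 t⟩⟩
  invFun d := ⟨⟨d.1.1, fun t => (d.2 t).1⟩, d.1.2, fun t => (d.2 t).2⟩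
  left_inv _ := rfl
  right_inv _ := rfl

instance : Fintype (Dty m n) := Fintype.ofEquiv _ (DtyEquiv m n).symm

lemma card_Dty [NeZero m] :
    Fintype.card (Dty m n) = ∑ u ∈ Kset m n, (Fu m (n := n) u).card ^ m := by
  rw [Fintype.card_congr (DtyEquiv m n), Fintype.card_sigma]
  have h1 : ∀ u : {u : Fin m → ℕ // u ∈ Kset m n},
      Fintype.card (∀ t : Fin m, {ω : Fin n → Fin m // ω ∈ Fu m (fun j => u.1 (j + t))})
        = (Fu m (n := n) u.1).card ^ m := by
    intro u
    rw [Fintype.card_pi]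
    have h2 : ∀ t : Fin m, Fintype.card {ω : Fin n → Fin m // ω ∈ Fu m (fun j => u.1 (j + t))}
        = (Fu m (n := n) u.1).card := fun t => by
      rw [Fintype.card_coe]; exact card_Fu_shift u.1 t
    simp [h2]
  simp_rw [h1]
  exact Finset.sum_coe_sort (Kset m n) (fun u => (Fu m (n := n) u).card ^ m)

lemma card_le_mult (hm : 2 ≤ m) {n : ℕ} (η : Euc s) (hη : ∀ j, ⟪η, X j⟫ = 1) :
    Fintype.card (Dty m n) ≤ mult X (∑ j, (n : ℝ) • X j) := by
  haveI : NeZero m := ⟨by omega⟩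
  set z₀ : Euc s := ∑ j, (n : ℝ) • X j with hz₀
  have hz₀N : ⟪η, z₀⟫ = ((∑ _j : Fin m, n : ℕ) : ℝ) := inner_sg η hη (fun _ => n)
  have hfin : {w : List (Fin m) | (w.map X).sum = z₀}.Finite := wordset_finite η hη hz₀N
  haveI := hfin.to_subtype
  set Φf : Dty m n → List (Fin m) := fun d =>
    List.ofFn fun p : Fin (m * n) =>
      d.1.2 (finProdFinEquiv.symm p).1 (finProdFinEquiv.symm p).2 with hΦf
  have hcntd : ∀ d : Dty m n, ∀ t, cnt m (d.1.2 t) = fun j => d.1.1 (j + t) := by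
    intro d t
    have := d.2.2 t
    simpa [Fu, Finset.mem_filter] using this
  have hsum : ∀ d : Dty m n, ((Φf d).map X).sum = z₀ := by
    intro d
    obtain ⟨⟨u, q⟩, hK, hF⟩ := d
    have husum : ∑ t, u t = n := by
      have h0 := hcntd ⟨⟨u, q⟩, hK, hF⟩ 0
      have : u = cnt m (q 0) := by
        funext j; rw [h0]; simp
      rw [this]
      exact sum_cnt (q 0)
    rw [hΦf]
    simp only [List.map_ofFn]
    rw [List.sum_ofFn]
    calc (∑ p : Fin (m * n), X (q (finProdFinEquiv.symm p).1 (finProdFinEquiv.symm p).2))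
        = ∑ tq : Fin m × Fin n, X (q tq.1 tq.2) :=
          Equiv.sum_comp finProdFinEquiv.symm (fun tq => X (q tq.1 tq.2))
      _ = ∑ t, ∑ i, X (q t i) := by rw [Fintype.sum_prod_type]
      _ = ∑ t, ∑ j, cnt m (q t) j • X j :=
          Finset.sum_congr rfl fun t _ => sum_X_of_cnt X (q t)
      _ = ∑ t, ∑ j, u (j + t) • X j := by
          refine Finset.sum_congr rfl fun t _ => ?_
          rw [hcntd ⟨⟨u, q⟩, hK, hF⟩ t]
      _ = ∑ j, (∑ t, u (j + t)) • X j := by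
          rw [Finset.sum_comm]
          exact Finset.sum_congr rfl fun j _ => (Finset.sum_smul).symm
      _ = ∑ j, (n : ℝ) • X j := by
          refine Finset.sum_congr rfl fun j _ => ?_
          have : ∑ t, u (j + t) = ∑ t, u t :=
            Fintype.sum_equiv (Equiv.addLeft j) _ _ fun t => rfl
          rw [this, husum, Nat.cast_smul_eq_nsmul]
  have hinj : Function.Injective Φf := by
    intro d d' hdd
    have hfn := List.ofFn_injective hdd
    have hq : ∀ t i, d.1.2 t i = d'.1.2 t i := by
      intro t i
      have := congrFun hfn (finProdFinEquiv (t, i))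
      simpa using this
    have h2 : d.1.2 = d'.1.2 := funext fun t => funext (hq t)
    have hu : d.1.1 = d'.1.1 := by
      funext j
      have e1 := congrFun (hcntd d 0) j
      have e2 := congrFun (hcntd d' 0) j
      rw [h2] at e1
      rw [e2] at e1
      simpa using e1.symm
    exact Subtype.ext (Prod.ext hu h2)
  have : Nat.card (Dty m n) ≤ Nat.card {w : List (Fin m) | (w.map X).sum = z₀} := by
    apply Nat.card_le_card_of_injective
      (fun d => (⟨Φf d, hsum d⟩ : {w : List (Fin m) | (w.map X).sum = z₀}))
    intro d d' h
    exact hinj (congrArg Subtype.val h)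
  rw [Nat.card_eq_fintype_card] at this
  exact this.trans_eq rfl

lemma mult_lower (hm : 2 ≤ m) {n : ℕ} (η : Euc s) (hη : ∀ j, ⟪η, X j⟫ = 1) :
    (m : ℝ) ^ (n * m) ≤ ((n : ℝ) + 1) ^ (m * (m - 1)) * (mult X (∑ j, (n : ℝ) • X j)) := by
  haveI : NeZero m := ⟨by omega⟩
  have hcheb := pow_sum_div_card_le_sum_pow (s := Kset m n)
    (f := fun u => ((Fu m (n := n) u).card : ℝ)) (fun u _ => Nat.cast_nonneg _) (m - 1)
  have hm1 : m - 1 + 1 = m := by omega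
  rw [hm1] at hcheb
  have hsum : ∑ u ∈ Kset m n, ((Fu m (n := n) u).card : ℝ) = (m : ℝ) ^ n := by
    rw [← Nat.cast_sum]
    rw [sum_card_Fu]
    push_cast
    rfl
  have hsumpow : ∑ u ∈ Kset m n, ((Fu m (n := n) u).card : ℝ) ^ m
      ≤ (mult X (∑ j, (n : ℝ) • X j) : ℝ) := by
    have h1 : ∑ u ∈ Kset m n, (Fu m (n := n) u).card ^ m ≤ mult X (∑ j, (n : ℝ) • X j) := by
      rw [← card_Dty]
      exact card_le_mult hm η hη
    calc ∑ u ∈ Kset m n, ((Fu m (n := n) u).card : ℝ) ^ m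
        = ((∑ u ∈ Kset m n, (Fu m (n := n) u).card ^ m : ℕ) : ℝ) := by push_cast; rfl
      _ ≤ _ := by exact_mod_cast h1
  rw [hsum] at hcheb
  have hKcard : ((Kset m n).card : ℝ) = ((n : ℝ) + 1) ^ m := by
    rw [card_K]; push_cast; rfl
  rw [hKcard] at hcheb
  have hKpos : (0 : ℝ) < (((n : ℝ) + 1) ^ m) ^ (m - 1) := by positivity
  rw [div_le_iff₀ hKpos] at hcheb
  calc (m : ℝ) ^ (n * m) = ((m : ℝ) ^ n) ^ m := by rw [← pow_mul]
    _ ≤ (∑ u ∈ Kset m n, ((Fu m (n := n) u).card : ℝ) ^ m) * (((n : ℝ) + 1) ^ m) ^ (m - 1) :=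
        hcheb
    _ ≤ (mult X (∑ j, (n : ℝ) • X j) : ℝ) * (((n : ℝ) + 1) ^ m) ^ (m - 1) := by
        apply mul_le_mul_of_nonneg_right hsumpow (le_of_lt hKpos)
    _ = ((n : ℝ) + 1) ^ (m * (m - 1)) * (mult X (∑ j, (n : ℝ) • X j)) := by
        rw [← pow_mul]; ring

lemma zn_mem (n : ℕ) : (∑ j, (n : ℝ) • X j) ∈ sgOf X := ⟨fun _ => n, rfl⟩

lemma multC_eq_mult_zn (hint : IntegralVecs X) {n : ℕ}
    {x : Euc s} (hd : dist x (∑ j, (n : ℝ) • X j) < 1 / 2) :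
    multC X x = mult X (∑ j, (n : ℝ) • X j) := by
  set zn : Euc s := ∑ j, (n : ℝ) • X j with hzn
  have hznm : zn ∈ sgOf X := zn_mem n
  have huniq : ∀ z ∈ sgOf X, dist x z = Metric.infDist x (sgOf X) → z = zn := by
    intro z hz hdz
    by_contra hne
    have h1 : (1 : ℝ) ≤ dist z zn := dist_ge_one hint hz hznm hne
    have h2 : dist x z ≤ dist x zn := hdz.trans_le (Metric.infDist_le_dist_of_mem hznm)
    have := dist_triangle z x zn
    rw [dist_comm z x] at this
    linarith
  have hinf : Metric.infDist x (sgOf X) = dist x zn := by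
    obtain ⟨z, hz, hdz⟩ := exists_nearest hint x
    rw [huniq z hz hdz.symm] at hdz
    exact hdz
  have hT : {q | ∃ z ∈ sgOf X, dist x z = Metric.infDist x (sgOf X) ∧ mult X z = q}
      = {mult X zn} := by
    ext q
    constructor
    · rintro ⟨z, hz, hdz, rfl⟩
      rw [huniq z hz hdz]
      rfl
    · rintro rfl
      exact ⟨zn, hznm, hinf.symm, rfl⟩
  rw [multC, hT, csInf_singleton]

lemma normSq_int (hint : IntegralVecs X) {z : Euc s} (hz : z ∈ sgOf X) :
    ∃ A : ℤ, ‖z‖ ^ 2 = (A : ℝ) := by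
  choose a ha using sg_coords hint hz
  refine ⟨∑ i, a i * a i, ?_⟩
  rw [← real_inner_self_eq_norm_sq]
  rw [PiLp.inner_apply]
  push_cast
  exact Finset.sum_congr rfl fun i _ => by rw [ha i]; simp [RCLike.inner_apply]; ring

lemma exists_round (hint : IntegralVecs X) {z : Euc s} (hz : z ∈ sgOf X) (n : ℕ) :
    ∃ k : ℕ, |(k : ℝ) - n * ‖z‖| < 1 / 2 := by
  obtain ⟨A, hA⟩ := normSq_int hint hz
  set t : ℝ := n * ‖z‖ with ht
  have ht0 : 0 ≤ t := mul_nonneg (Nat.cast_nonneg n) (norm_nonneg z)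
  set K : ℕ := ⌊t⌋₊ with hK
  have hfr : (K : ℝ) ≤ t ∧ t < K + 1 := ⟨Nat.floor_le ht0, Nat.lt_floor_add_one t⟩
  have hne : t ≠ (K : ℝ) + 1 / 2 := by
    intro heq
    have ht2 : t ^ 2 = (n : ℝ) ^ 2 * A := by
      rw [ht, mul_pow, hA]
    have e1 : t ^ 2 = ((K : ℝ) + 1 / 2) ^ 2 := by rw [heq]
    have h5 : (4 : ℝ) * ((n : ℝ) ^ 2 * A) = 4 * (K : ℝ) ^ 2 + 4 * K + 1 := by
      rw [← ht2, e1]; ring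
    have hint4 : (4 : ℤ) * ((n : ℤ) ^ 2 * A) = 4 * (K : ℤ) ^ 2 + 4 * (K : ℤ) + 1 := by
      exact_mod_cast h5
    omega
  rcases lt_or_gt_of_ne hne with h | h
  · exact ⟨K, by rw [abs_sub_lt_iff]; constructor <;> linarith [hfr.1, hfr.2]⟩
  · refine ⟨K + 1, ?_⟩
    rw [abs_sub_lt_iff]
    push_cast
    constructor <;> linarith [hfr.1, hfr.2]

lemma S_mem : (∑ j, X j) ∈ sgOf X := ⟨fun _ => 1, by simp⟩

lemma S_norm_ge (hm : 2 ≤ m) (hint : IntegralVecs X) (η : Euc s)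
    (hη : ∀ j, ⟪η, X j⟫ = 1) : 1 ≤ ‖∑ j, X j‖ := by
  have hS : ⟪η, ∑ j, X j⟫ = (m : ℝ) := by
    rw [inner_sum]
    simp [hη]
  have hS0 : (∑ j, X j) ≠ 0 := by
    intro h
    rw [h, inner_zero_right] at hS
    have hm0 : (m : ℝ) ≠ 0 := by positivity
    exact hm0 hS.symm
  have h0 : (0 : Euc s) ∈ sgOf X := ⟨0, by simp⟩
  have := dist_ge_one hint (S_mem (X := X)) h0 hS0
  rwa [dist_zero_right] at this

lemma gamma_ge_aux (hm : 2 ≤ m) (hint : IntegralVecs X) (η : Euc s)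
    (hη : ∀ j, ⟪η, X j⟫ = 1) {L : ℝ}
    (hL : Filter.Tendsto
      (fun k : ℕ => Real.log (multC X ((k : ℝ) • (‖∑ j, X j‖⁻¹ • ∑ j, X j))) / k)
      Filter.atTop (nhds L)) :
    ‖∑ j, X j‖⁻¹ * ((m : ℝ) * Real.log m) ≤ L := by
  set S : Euc s := ∑ j, X j with hS
  set θ₀ : Euc s := ‖S‖⁻¹ • S with hθ₀
  have hS1 : 1 ≤ ‖S‖ := S_norm_ge hm hint η hη
  have hSpos : (0 : ℝ) < ‖S‖ := lt_of_lt_of_le one_pos hS1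
  have hSne : ‖S‖ ≠ 0 := ne_of_gt hSpos
  -- choose rounding sequence
  have hround : ∀ n : ℕ, ∃ k : ℕ, |(k : ℝ) - n * ‖S‖| < 1 / 2 :=
    fun n => exists_round hint (S_mem (X := X)) n
  choose σ hσ using hround
  -- distance estimate
  have hdist : ∀ n : ℕ, dist ((σ n : ℝ) • θ₀) (∑ j, (n : ℝ) • X j) < 1 / 2 := by
    intro n
    have hzn : (∑ j, (n : ℝ) • X j) = (n : ℝ) • S := by rw [hS, Finset.smul_sum]
    rw [hzn, dist_eq_norm, hθ₀, smul_smul, ← sub_smul, norm_smul, Real.norm_eq_abs]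
    have : |(σ n : ℝ) * ‖S‖⁻¹ - (n : ℝ)| * ‖S‖ = |(σ n : ℝ) - n * ‖S‖| := by
      rw [← abs_of_pos hSpos, ← abs_mul]
      congr 1
      field_simp
      rw [abs_of_pos hSpos]; ring
    rw [this]
    exact hσ n
  have hmc : ∀ n : ℕ, multC X ((σ n : ℝ) • θ₀) = mult X (∑ j, (n : ℝ) • X j) :=
    fun n => multC_eq_mult_zn hint (hdist n)
  -- log lower bound
  set E : ℝ := ((m * (m - 1) : ℕ) : ℝ) with hE
  have hlog : ∀ n : ℕ,
      ((n : ℝ) * m) * Real.log m - E * Real.log ((n : ℝ) + 1)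
        ≤ Real.log (multC X ((σ n : ℝ) • θ₀)) := by
    intro n
    rw [hmc n]
    have hml := mult_lower (n := n) hm η hη
    have hmpos : (0 : ℝ) < (mult X (∑ j, (n : ℝ) • X j) : ℝ) := by
      exact_mod_cast mult_pos η hη (zn_mem n)
    have hlhs : (0 : ℝ) < (m : ℝ) ^ (n * m) := by positivity
    have h := Real.log_le_log hlhs hml
    rw [Real.log_pow] at h
    rw [Real.log_mul (by positivity) (ne_of_gt hmpos), Real.log_pow] at h
    have : ((n * m : ℕ) : ℝ) = (n : ℝ) * m := by push_cast; ring
    rw [this] at h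
    rw [hE]
    linarith [h]
  -- σ n growth
  have hσlow : ∀ n : ℕ, (n : ℝ) * ‖S‖ - 1 / 2 ≤ (σ n : ℝ) := by
    intro n
    have := abs_sub_lt_iff.1 (hσ n)
    linarith [this.2]
  have hσhigh : ∀ n : ℕ, (σ n : ℝ) ≤ (n : ℝ) * ‖S‖ + 1 / 2 := by
    intro n
    have := abs_sub_lt_iff.1 (hσ n)
    linarith [this.1]
  have hσpos : ∀ n : ℕ, 1 ≤ n → (0 : ℝ) < (σ n : ℝ) := by
    intro n hn
    have h1 : (1 : ℝ) ≤ (n : ℝ) := by exact_mod_cast hn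
    have := hσlow n
    nlinarith
  have hσtop : Filter.Tendsto σ Filter.atTop Filter.atTop := by
    rw [Filter.tendsto_atTop_atTop]
    intro b
    refine ⟨b + 1, fun n hn => ?_⟩
    have hbn : (n : ℝ) ≥ (b : ℝ) + 1 := by exact_mod_cast hn
    have h1 := hσlow n
    have : (b : ℝ) ≤ (σ n : ℝ) := by nlinarith
    exact_mod_cast this
  -- limits
  have h1 : Filter.Tendsto (fun n : ℕ => (σ n : ℝ) / n) Filter.atTop (nhds ‖S‖) := by
    apply tendsto_of_tendsto_of_tendsto_of_le_of_le'
      (g := fun n : ℕ => ‖S‖ - 1 / (2 * n)) (h := fun n : ℕ => ‖S‖ + 1 / (2 * n))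
    · have : Filter.Tendsto (fun n : ℕ => 1 / (2 * (n : ℝ))) Filter.atTop (nhds 0) := by
        apply Filter.Tendsto.div_atTop tendsto_const_nhds
        exact Filter.Tendsto.const_mul_atTop two_pos tendsto_natCast_atTop_atTop
      simpa using tendsto_const_nhds.sub this
    · have : Filter.Tendsto (fun n : ℕ => 1 / (2 * (n : ℝ))) Filter.atTop (nhds 0) := by
        apply Filter.Tendsto.div_atTop tendsto_const_nhds
        exact Filter.Tendsto.const_mul_atTop two_pos tendsto_natCast_atTop_atTop
      simpa using tendsto_const_nhds.add this
    · filter_upwards [Filter.eventually_ge_atTop 1] with n hn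
      have hnpos : (0 : ℝ) < n := by exact_mod_cast hn
      rw [le_div_iff₀ hnpos]
      have := hσlow n
      have hinv : ((‖S‖ - 1 / (2 * n)) * n) = n * ‖S‖ - 1 / 2 := by field_simp
      rw [hinv]
      exact this
    · filter_upwards [Filter.eventually_ge_atTop 1] with n hn
      have hnpos : (0 : ℝ) < n := by exact_mod_cast hn
      rw [div_le_iff₀ hnpos]
      have := hσhigh n
      have hinv : ((‖S‖ + 1 / (2 * n)) * n) = n * ‖S‖ + 1 / 2 := by field_simp
      rw [hinv]
      exact this
  have h2 : Filter.Tendsto (fun n : ℕ => (n : ℝ) / σ n) Filter.atTop (nhds ‖S‖⁻¹) := by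
    have := h1.inv₀ hSne
    refine this.congr fun n => ?_
    rw [inv_div]
  have h3 : Filter.Tendsto (fun n : ℕ => Real.log ((n : ℝ) + 1) / n) Filter.atTop (nhds 0) := by
    have hbase := Real.tendsto_pow_log_div_mul_add_atTop 1 (-1) 1 one_ne_zero
    have hnat : Filter.Tendsto (fun n : ℕ => (n : ℝ) + 1) Filter.atTop Filter.atTop :=
      Filter.tendsto_atTop_add_const_right Filter.atTop 1 tendsto_natCast_atTop_atTop
    have hcomp := hbase.comp hnat
    refine hcomp.congr fun n => ?_
    simp
  have h4 : Filter.Tendsto (fun n : ℕ => Real.log ((n : ℝ) + 1) / σ n) Filter.atTop (nhds 0) := by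
    apply squeeze_zero' (g := fun n : ℕ => 2 * (Real.log ((n : ℝ) + 1) / n))
    · filter_upwards [Filter.eventually_ge_atTop 1] with n hn
      have hσp := hσpos n hn
      have hlogpos : 0 ≤ Real.log ((n : ℝ) + 1) := Real.log_nonneg (by have h01 : (0:ℝ) ≤ (n:ℝ) := Nat.cast_nonneg n; linarith)
      exact div_nonneg hlogpos (le_of_lt hσp)
    · filter_upwards [Filter.eventually_ge_atTop 1] with n hn
      have hnpos : (0 : ℝ) < n := by exact_mod_cast hn
      have hσp := hσpos n hn
      have hσge : (n : ℝ) / 2 ≤ σ n := by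
        have hlo := hσlow n
        have hn1 : (1 : ℝ) ≤ (n : ℝ) := by exact_mod_cast hn
        nlinarith [mul_le_mul_of_nonneg_left hS1 (le_of_lt hnpos)]
      have hlogpos : 0 ≤ Real.log ((n : ℝ) + 1) := Real.log_nonneg (by have h01 : (0:ℝ) ≤ (n:ℝ) := Nat.cast_nonneg n; linarith)
      calc Real.log ((n : ℝ) + 1) / σ n ≤ Real.log ((n : ℝ) + 1) / ((n : ℝ) / 2) := by
            rw [div_le_div_iff₀ hσp (by positivity)]
            exact mul_le_mul_of_nonneg_left hσge hlogpos
        _ = 2 * (Real.log ((n : ℝ) + 1) / n) := by field_simp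
    · simpa using h3.const_mul 2
  have hlbtendsto : Filter.Tendsto
      (fun n : ℕ => (((n : ℝ) * m) * Real.log m - E * Real.log ((n : ℝ) + 1)) / σ n)
      Filter.atTop (nhds (‖S‖⁻¹ * ((m : ℝ) * Real.log m))) := by
    have heq : ∀ᶠ n : ℕ in Filter.atTop,
        (((n : ℝ) * m) * Real.log m - E * Real.log ((n : ℝ) + 1)) / σ n
          = ((n : ℝ) / σ n) * ((m : ℝ) * Real.log m)
            - E * (Real.log ((n : ℝ) + 1) / σ n) := by
      filter_upwards [Filter.eventually_ge_atTop 1] with n hn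
      have := hσpos n hn
      field_simp
    have hT : Filter.Tendsto
        (fun n : ℕ => ((n : ℝ) / σ n) * ((m : ℝ) * Real.log m)
          - E * (Real.log ((n : ℝ) + 1) / σ n))
        Filter.atTop (nhds (‖S‖⁻¹ * ((m : ℝ) * Real.log m) - E * 0)) :=
      (h2.mul_const _).sub ((h4.const_mul E))
    rw [mul_zero, sub_zero] at hT
    exact hT.congr' (heq.mono fun n h => h.symm)
  have hcomp : Filter.Tendsto
      (fun n : ℕ => Real.log (multC X ((σ n : ℝ) • θ₀)) / (σ n : ℝ))
      Filter.atTop (nhds L) := hL.comp hσtop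
  refine le_of_tendsto_of_tendsto hlbtendsto hcomp ?_
  filter_upwards [Filter.eventually_ge_atTop 1] with n hn
  have hσp := hσpos n hn
  exact (div_le_div_iff_of_pos_right hσp).2 (hlog n)


end Aux

/-- If `X₁,…,X_m` are `η`-coplanar, then `max_θ γ(θ)/⟨η,θ⟩ = log m`, attained at
`θ₀ = (∑ X_j)/‖∑ X_j‖`. -/
theorem stmt14 {s m : ℕ} (hs : 1 ≤ s) (hm : 2 ≤ m) (X : Fin m → Euc s)
    (hint : IntegralVecs X)
    (hspan : Submodule.span ℝ (Set.range X) = ⊤)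
    (α : Euc s) (hα : ∀ j, 0 < ⟪X j, α⟫)
    (η : Euc s) (hη : ∀ j, ⟪η, X j⟫ = 1)
    (γ : Euc s → ℝ)
    (hγ : ∀ θ ∈ coneOf X, ‖θ‖ = 1 →
      Filter.Tendsto (fun k : ℕ => Real.log (multC X ((k : ℝ) • θ)) / k)
        Filter.atTop (nhds (γ θ))) :
    let θ₀ : Euc s := ‖∑ j, X j‖⁻¹ • ∑ j, X j
    θ₀ ∈ coneOf X ∧ ‖θ₀‖ = 1 ∧ γ θ₀ / ⟪η, θ₀⟫ = Real.log m ∧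
    ∀ θ ∈ coneOf X, ‖θ‖ = 1 → γ θ / ⟪η, θ⟫ ≤ Real.log m := by
  intro θ₀
  set S : Euc s := ∑ j, X j with hSdef
  have hS1 : 1 ≤ ‖S‖ := S_norm_ge hm hint η hη
  have hSpos : (0 : ℝ) < ‖S‖ := lt_of_lt_of_le one_pos hS1
  have hSne : ‖S‖ ≠ 0 := ne_of_gt hSpos
  have hS0 : S ≠ 0 := fun h => by rw [h, norm_zero] at hSne; exact hSne rfl
  have hinner_pos : ∀ θ ∈ coneOf X, ‖θ‖ = 1 → 0 < ⟪η, θ⟫ := by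
    intro θ hθ hθ1
    obtain ⟨c, hc, rfl⟩ := hθ
    have hval : ⟪η, ∑ j, c j • X j⟫ = ∑ j, c j := by
      rw [inner_sum]
      refine Finset.sum_congr rfl fun j _ => ?_
      rw [real_inner_smul_right, hη, mul_one]
    rw [hval]
    rcases (Finset.sum_nonneg fun j _ => hc j).lt_or_eq with h | h
    · exact h
    · exfalso
      have hall : ∀ j ∈ Finset.univ, c j = 0 :=
        (Finset.sum_eq_zero_iff_of_nonneg fun j _ => hc j).1 h.symm
      have : (∑ j, c j • X j) = 0 :=
        Finset.sum_eq_zero fun j hj => by rw [hall j hj, zero_smul]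
      rw [this, norm_zero] at hθ1
      norm_num at hθ1
  have hθ₀cone : θ₀ ∈ coneOf X := by
    refine ⟨fun _ => ‖S‖⁻¹, fun _ => inv_nonneg.2 (norm_nonneg _), ?_⟩
    rw [← Finset.smul_sum]
  have hθ₀norm : ‖θ₀‖ = 1 := by
    show ‖‖S‖⁻¹ • S‖ = 1
    exact norm_smul_inv_norm hS0
  have hθ₀inner : ⟪η, θ₀⟫ = ‖S‖⁻¹ * m := by
    show ⟪η, ‖S‖⁻¹ • S⟫ = ‖S‖⁻¹ * m
    rw [real_inner_smul_right]
    congr 1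
    rw [hSdef, inner_sum]
    simp [hη]
  have htend := hγ θ₀ hθ₀cone hθ₀norm
  have hle : γ θ₀ ≤ ⟪η, θ₀⟫ * Real.log m := gamma_le_aux hm hint η hη hθ₀cone htend
  have hge : ‖S‖⁻¹ * ((m : ℝ) * Real.log m) ≤ γ θ₀ := gamma_ge_aux hm hint η hη htend
  have hval : γ θ₀ = ⟪η, θ₀⟫ * Real.log m := by
    apply le_antisymm hle
    rw [hθ₀inner, mul_assoc]
    exact hge
  have hθ₀pos : 0 < ⟪η, θ₀⟫ := hinner_pos θ₀ hθ₀cone hθ₀norm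
  refine ⟨hθ₀cone, hθ₀norm, ?_, ?_⟩
  · rw [hval, mul_comm, mul_div_assoc, div_self (ne_of_gt hθ₀pos), mul_one]
  · intro θ hθ hθ1
    have hleθ : γ θ ≤ ⟪η, θ⟫ * Real.log m := gamma_le_aux hm hint η hη hθ (hγ θ hθ hθ1)
    have hpos := hinner_pos θ hθ hθ1
    rw [div_le_iff₀ hpos]
    rw [mul_comm] at hleθ
    exact hleθ
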